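/- With notation as follows: (s_k)_{k≥1} i.i.d. uniform on {−1,+1}, D⁻(k) the divisors of k, D⁺(k) the divisors of 2k not dividing k, L_s(n) = ⋃_{k≤n} D^{(s_k)}(k), and I(n,d) the indicator that d ∈ L_s(n). If d₁, d₂ are positive integers with lcm(d₁,d₂) ≤ 2n and ν₂(d₁) ≠ ν₂(d₂) (different 2-adic valuations), then the probability that d₁ ∉ L_s(n) and d₂ ∉ L_s(n) is zero; equivalently, almost surely at least one of d₁, d₂ belongs to L_s(n). -/

import Mathlib

open MeasureTheory ProbabilityTheory

/-- `d ∈ L_s(n)(ω)`: there is `k ≤ n` with `d ∈ D^{(s_k)}(k)`, where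
`D⁻(k)` is the set of divisors of `k` and `D⁺(k)` is the set of divisors
of `2k` not dividing `k`. -/
def memL {Ω : Type*} (s : ℕ → Ω → ℤ) (n d : ℕ) (ω : Ω) : Prop :=
  ∃ k ∈ Finset.Icc 1 n,
    if s k ω = -1 then d ∣ k else (d ∣ 2 * k ∧ ¬ d ∣ k)

lemma key_nat (n d₁ d₂ : ℕ) (hd₁ : 1 ≤ d₁) (hd₂ : 1 ≤ d₂)
    (hlcm : Nat.lcm d₁ d₂ ≤ 2 * n)
    (hval : padicValNat 2 d₁ < padicValNat 2 d₂) :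
    ∃ k ∈ Finset.Icc 1 n, d₁ ∣ k ∧ d₂ ∣ 2 * k ∧ ¬ d₂ ∣ k := by
  set L := Nat.lcm d₁ d₂ with hLdef
  have hd₁0 : d₁ ≠ 0 := by omega
  have hd₂0 : d₂ ≠ 0 := by omega
  have hL0 : L ≠ 0 := Nat.lcm_ne_zero hd₁0 hd₂0
  have hν2 : 1 ≤ padicValNat 2 d₂ := by omega
  have h2d₂ : 2 ∣ d₂ := by
    have := pow_padicValNat_dvd (p := 2) (n := d₂)
    exact dvd_trans (dvd_trans (pow_dvd_pow 2 hν2) (by simpa using this)) dvd_rfl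
  have h2L : 2 ∣ L := h2d₂.trans (Nat.dvd_lcm_right _ _)
  obtain ⟨k, hk⟩ := h2L
  have hk0 : k ≠ 0 := by rintro rfl; simp at hk; exact hL0 hk
  -- padicValNat facts via factorization
  have hfac : L.factorization = d₁.factorization ⊔ d₂.factorization :=
    Nat.factorization_lcm hd₁0 hd₂0
  have hfp : ∀ m : ℕ, m ≠ 0 → m.factorization 2 = padicValNat 2 m := by
    intro m hm
    simp [Nat.factorization_def m Nat.prime_two]
  have hνL : padicValNat 2 L = padicValNat 2 d₂ := by
    have := congrFun (congrArg (·.toFun) hfac) 2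
    have h2 : L.factorization 2 = max (d₁.factorization 2) (d₂.factorization 2) := by
      rw [hfac]; rfl
    rw [hfp L hL0, hfp d₁ hd₁0, hfp d₂ hd₂0] at h2
    omega
  have hνk : padicValNat 2 L = 1 + padicValNat 2 k := by
    rw [hk, padicValNat.mul (by norm_num) hk0, padicValNat.self (by norm_num)]
  -- d₁ ∣ k
  have hd₁k : d₁ ∣ k := by
    have h2d₁L : 2 * d₁ ∣ L := by
      rw [← Nat.factorization_le_iff_dvd (by positivity) hL0]
      intro p
      rcases eq_or_ne p 2 with rfl | hp
      · have : (2 * d₁).factorization 2 = 1 + d₁.factorization 2 := by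
          rw [Nat.factorization_mul (by norm_num) hd₁0]
          simp [Nat.Prime.factorization Nat.prime_two]
        rw [this, hfp d₁ hd₁0, hfp L hL0, hνL]
        omega
      · have : (2 * d₁).factorization p = d₁.factorization p := by
          rw [Nat.factorization_mul (by norm_num) hd₁0]
          simp [Nat.Prime.factorization Nat.prime_two, Finsupp.single_apply, hp.symm]
        rw [this, hfac]
        simp only [Finsupp.sup_apply, le_max_iff]
        left; rfl
    rw [hk] at h2d₁L
    exact (mul_dvd_mul_iff_left (by norm_num : (2:ℕ) ≠ 0)).mp h2d₁L
  -- d₂ ∤ k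
  have hd₂k : ¬ d₂ ∣ k := by
    intro hdvd
    have hle : padicValNat 2 d₂ ≤ padicValNat 2 k := by
      have := (Nat.factorization_le_iff_dvd hd₂0 hk0).mpr hdvd 2
      rw [hfp d₂ hd₂0, hfp k hk0] at this
      exact this
    omega
  refine ⟨k, ?_, hd₁k, by rw [← hk]; exact Nat.dvd_lcm_right _ _, hd₂k⟩
  simp only [Finset.mem_Icc]
  constructor
  · omega
  · omega

lemma memL_or {Ω : Type*} (s : ℕ → Ω → ℤ) (n d₁ d₂ : ℕ) (hd₁ : 1 ≤ d₁)
    (hd₂ : 1 ≤ d₂) (hlcm : Nat.lcm d₁ d₂ ≤ 2 * n)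
    (hval : padicValNat 2 d₁ < padicValNat 2 d₂) (ω : Ω) :
    memL s n d₁ ω ∨ memL s n d₂ ω := by
  obtain ⟨k, hk, h1, h2, h3⟩ := key_nat n d₁ d₂ hd₁ hd₂ hlcm hval
  by_cases hs : s k ω = -1
  · left; exact ⟨k, hk, by simp [hs, h1]⟩
  · right; exact ⟨k, hk, by simp [hs, h2, h3]⟩

theorem stmt_11 {Ω : Type*} [MeasurableSpace Ω] (μ : Measure Ω)
    [IsProbabilityMeasure μ] (s : ℕ → Ω → ℤ)
    (hmeas : ∀ k, Measurable (s k))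
    (hrange : ∀ k ω, s k ω = -1 ∨ s k ω = 1)
    (hindep : iIndepFun s μ)
    (hunif : ∀ k, μ {ω | s k ω = 1} = 1 / 2)
    (n d₁ d₂ : ℕ) (hn : 1 ≤ n) (hd₁ : 1 ≤ d₁) (hd₂ : 1 ≤ d₂)
    (hlcm : Nat.lcm d₁ d₂ ≤ 2 * n)
    (hval : padicValNat 2 d₁ ≠ padicValNat 2 d₂) :
    μ {ω | ¬ memL s n d₁ ω ∧ ¬ memL s n d₂ ω} = 0 := by
  have hempty : {ω | ¬ memL s n d₁ ω ∧ ¬ memL s n d₂ ω} = ∅ := by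
    ext ω
    simp only [Set.mem_setOf_eq, Set.mem_empty_iff_false, iff_false, not_and, not_not]
    intro h1
    rcases lt_or_gt_of_ne hval with h | h
    · rcases memL_or s n d₁ d₂ hd₁ hd₂ hlcm h ω with h' | h'
      · exact absurd h' h1
      · exact h'
    · rcases memL_or s n d₂ d₁ hd₂ hd₁ (by rwa [Nat.lcm_comm]) h ω with h' | h'
      · exact h'
      · exact absurd h' h1
  rw [hempty]
  simp
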